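/- Let n and k be integers with 1 ≤ k ≤ n−2. The function γ̄₁ : ℝ^{\{k,…,n−2\}} → ℝ defined by γ̄₁(n_k, …, n_{n−2}) = n·Σ_{i=k}^{n−2} (1/i − 1/(n−1))·n_i − Σ_{i=k}^{n−2} (1/i − 1/(n−1))·n_i² − 2·Σ_{k ≤ i < j ≤ n−2} (1/j − 1/(n−1))·n_i·n_j is concave on all of ℝ^{\{k,…,n−2\}}. -/

import Mathlib

set_option linter.unnecessarySeqFocus false

open Finset

lemma psd_aux (a : ℕ → ℝ) (s : Finset ℕ) :
    ∀ (z : ℕ → ℝ) (b : ℝ),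
      (∀ i ∈ s, ∀ j ∈ s, i ≤ j → a j ≤ a i) →
      0 ≤ b → (∀ i ∈ s, b ≤ a i) →
      b * (∑ i ∈ s, z i) ^ 2 ≤
        ∑ i ∈ s, a i * z i ^ 2 +
          2 * ∑ i ∈ s, ∑ j ∈ s, (if i < j then a j * z i * z j else 0) := by
  induction s using Finset.induction_on_max with
  | empty => intro z b _ hb _; simp
  | insert M t hMt ih =>
    intro z b hmono hb hba
    have hMnot : M ∉ t := fun h => lt_irrefl M (hMt M h)
    have hMmem : M ∈ insert M t := mem_insert_self M t
    have h2 : ∑ j ∈ insert M t, (if M < j then a j * z M * z j else 0) = 0 := by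
      rw [Finset.sum_insert hMnot, if_neg (lt_irrefl M)]
      rw [Finset.sum_eq_zero fun j hj => if_neg (not_lt.mpr (le_of_lt (hMt j hj)))]
      ring
    have h1 : ∀ i ∈ t, ∑ j ∈ insert M t, (if i < j then a j * z i * z j else 0)
        = a M * z i * z M + ∑ j ∈ t, (if i < j then a j * z i * z j else 0) := by
      intro i hi
      rw [Finset.sum_insert hMnot, if_pos (hMt i hi)]
    rw [Finset.sum_insert hMnot, Finset.sum_insert hMnot, Finset.sum_insert hMnot, h2,
      Finset.sum_congr rfl h1, Finset.sum_add_distrib]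
    have haM : 0 ≤ a M := le_trans hb (hba M hMmem)
    have IH := ih z (a M) (fun i hi j hj hij => hmono i (mem_insert_of_mem hi) j (mem_insert_of_mem hj) hij)
      haM (fun i hi => hmono i (mem_insert_of_mem hi) M hMmem (le_of_lt (hMt i hi)))
    have hbM : b ≤ a M := hba M hMmem
    have key : b * (z M + ∑ i ∈ t, z i) ^ 2 ≤ a M * (z M + ∑ i ∈ t, z i) ^ 2 :=
      mul_le_mul_of_nonneg_right hbM (sq_nonneg _)
    have hsum : ∑ i ∈ t, a M * z i * z M = a M * z M * ∑ i ∈ t, z i := by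
      rw [Finset.mul_sum]; exact Finset.sum_congr rfl fun i _ => by ring
    rw [hsum]
    nlinarith [IH, key]

theorem stmt_10 {n k : ℕ} (hk : 1 ≤ k) (hkn : k + 2 ≤ n) :
    ConcaveOn ℝ Set.univ
      (fun x : { i // i ∈ Finset.Icc k (n - 2) } → ℝ =>
        (n : ℝ) * ∑ i : { i // i ∈ Finset.Icc k (n - 2) },
            (1 / ((i : ℕ) : ℝ) - 1 / ((n : ℝ) - 1)) * x i
        - ∑ i : { i // i ∈ Finset.Icc k (n - 2) },
            (1 / ((i : ℕ) : ℝ) - 1 / ((n : ℝ) - 1)) * (x i) ^ 2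
        - 2 * ∑ i : { i // i ∈ Finset.Icc k (n - 2) },
            ∑ j : { i // i ∈ Finset.Icc k (n - 2) },
              if (i : ℕ) < (j : ℕ) then
                (1 / ((j : ℕ) : ℝ) - 1 / ((n : ℝ) - 1)) * x i * x j
              else 0) := by
  classical
  refine ⟨convex_univ, ?_⟩
  intro x hx y hy p q hp hq hpq
  obtain rfl : q = 1 - p := by linarith
  simp only [smul_eq_mul, Pi.add_apply, Pi.smul_apply]
  -- nonnegativity of the quadratic form at x - y
  have hQ : 0 ≤ (∑ i : { i // i ∈ Finset.Icc k (n - 2) }, (1 / ((i : ℕ) : ℝ) - 1 / ((n : ℝ) - 1)) * (x i - y i) ^ 2)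
      + 2 * ∑ i : { i // i ∈ Finset.Icc k (n - 2) }, ∑ j : { i // i ∈ Finset.Icc k (n - 2) },
          (if (i : ℕ) < (j : ℕ) then (1 / ((j : ℕ) : ℝ) - 1 / ((n : ℝ) - 1)) * (x i - y i) * (x j - y j) else 0) := by
    set c : ℕ → ℝ := fun m => 1 / (m : ℝ) - 1 / ((n : ℝ) - 1) with hc
    set z : ℕ → ℝ := fun m => if h : m ∈ Finset.Icc k (n - 2) then x ⟨m, h⟩ - y ⟨m, h⟩ else 0 with hzdef
    have hz : ∀ i : { i // i ∈ Finset.Icc k (n - 2) }, z (i : ℕ) = x i - y i := by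
      intro i
      simp only [hzdef]
      rw [dif_pos i.2]
    have e1 : (∑ i : { i // i ∈ Finset.Icc k (n - 2) }, (1 / ((i : ℕ) : ℝ) - 1 / ((n : ℝ) - 1)) * (x i - y i) ^ 2)
        = ∑ m ∈ Finset.Icc k (n - 2), c m * z m ^ 2 := by
      rw [← Finset.sum_coe_sort (Finset.Icc k (n - 2)) (fun m => c m * z m ^ 2)]
      exact Finset.sum_congr rfl fun i _ => by rw [hz i]
    have e2 : (∑ i : { i // i ∈ Finset.Icc k (n - 2) }, ∑ j : { i // i ∈ Finset.Icc k (n - 2) },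
          (if (i : ℕ) < (j : ℕ) then (1 / ((j : ℕ) : ℝ) - 1 / ((n : ℝ) - 1)) * (x i - y i) * (x j - y j) else 0))
        = ∑ m ∈ Finset.Icc k (n - 2), ∑ m' ∈ Finset.Icc k (n - 2), (if m < m' then c m' * z m * z m' else 0) := by
      rw [← Finset.sum_coe_sort (Finset.Icc k (n - 2))
        (fun m => ∑ m' ∈ Finset.Icc k (n - 2), (if m < m' then c m' * z m * z m' else 0))]
      refine Finset.sum_congr rfl fun i _ => ?_
      rw [← Finset.sum_coe_sort (Finset.Icc k (n - 2))
        (fun m' => (if (i : ℕ) < m' then c m' * z (i : ℕ) * z m' else 0))]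
      refine Finset.sum_congr rfl fun j _ => ?_
      rw [hz i, hz j]
    rw [e1, e2]
    have hmono : ∀ i ∈ Finset.Icc k (n - 2), ∀ j ∈ Finset.Icc k (n - 2), i ≤ j → c j ≤ c i := by
      intro i hi j hj hij
      simp only [Finset.mem_Icc] at hi hj
      have hi0 : (0 : ℝ) < (i : ℝ) := by exact_mod_cast lt_of_lt_of_le hk hi.1
      have : 1 / (j : ℝ) ≤ 1 / (i : ℝ) :=
        one_div_le_one_div_of_le hi0 (by exact_mod_cast hij)
      simp only [hc]; linarith
    have hc0 : ∀ i ∈ Finset.Icc k (n - 2), (0 : ℝ) ≤ c i := by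
      intro i hi
      simp only [Finset.mem_Icc] at hi
      have hi0 : (0 : ℝ) < (i : ℝ) := by exact_mod_cast lt_of_lt_of_le hk hi.1
      have h2 : i + 1 ≤ n - 1 := by omega
      have hle : (i : ℝ) ≤ (n : ℝ) - 1 := by
        have h3 : ((i : ℕ) : ℝ) + 1 ≤ ((n - 1 : ℕ) : ℝ) := by exact_mod_cast h2
        have hn1 : ((n - 1 : ℕ) : ℝ) = (n : ℝ) - 1 := by
          have h4 : 1 ≤ n := by omega
          push_cast [h4]; ring
        linarith [hn1 ▸ h3]
      have := one_div_le_one_div_of_le hi0 hle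
      simp only [hc]; linarith
    have := psd_aux c (Finset.Icc k (n - 2)) z 0 hmono le_rfl hc0
    simpa using this
  -- expansion identities
  have hA : (∑ i : { i // i ∈ Finset.Icc k (n - 2) }, (1 / ((i : ℕ) : ℝ) - 1 / ((n : ℝ) - 1)) * (p * x i + (1 - p) * y i))
      = p * ∑ i : { i // i ∈ Finset.Icc k (n - 2) }, (1 / ((i : ℕ) : ℝ) - 1 / ((n : ℝ) - 1)) * x i
        + (1 - p) * ∑ i : { i // i ∈ Finset.Icc k (n - 2) }, (1 / ((i : ℕ) : ℝ) - 1 / ((n : ℝ) - 1)) * y i := by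
    rw [Finset.mul_sum, Finset.mul_sum, ← Finset.sum_add_distrib]
    exact Finset.sum_congr rfl fun i _ => by ring
  have hB : (∑ i : { i // i ∈ Finset.Icc k (n - 2) }, (1 / ((i : ℕ) : ℝ) - 1 / ((n : ℝ) - 1)) * (p * x i + (1 - p) * y i) ^ 2)
      = p * ∑ i : { i // i ∈ Finset.Icc k (n - 2) }, (1 / ((i : ℕ) : ℝ) - 1 / ((n : ℝ) - 1)) * (x i) ^ 2
        + (1 - p) * ∑ i : { i // i ∈ Finset.Icc k (n - 2) }, (1 / ((i : ℕ) : ℝ) - 1 / ((n : ℝ) - 1)) * (y i) ^ 2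
        - p * (1 - p) * ∑ i : { i // i ∈ Finset.Icc k (n - 2) }, (1 / ((i : ℕ) : ℝ) - 1 / ((n : ℝ) - 1)) * (x i - y i) ^ 2 := by
    rw [Finset.mul_sum, Finset.mul_sum, Finset.mul_sum, ← Finset.sum_add_distrib,
      ← Finset.sum_sub_distrib]
    exact Finset.sum_congr rfl fun i _ => by ring
  have hC : (∑ i : { i // i ∈ Finset.Icc k (n - 2) }, ∑ j : { i // i ∈ Finset.Icc k (n - 2) },
        (if (i : ℕ) < (j : ℕ) then (1 / ((j : ℕ) : ℝ) - 1 / ((n : ℝ) - 1)) * (p * x i + (1 - p) * y i) * (p * x j + (1 - p) * y j) else 0))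
      = p * ∑ i : { i // i ∈ Finset.Icc k (n - 2) }, ∑ j : { i // i ∈ Finset.Icc k (n - 2) },
          (if (i : ℕ) < (j : ℕ) then (1 / ((j : ℕ) : ℝ) - 1 / ((n : ℝ) - 1)) * x i * x j else 0)
        + (1 - p) * ∑ i : { i // i ∈ Finset.Icc k (n - 2) }, ∑ j : { i // i ∈ Finset.Icc k (n - 2) },
          (if (i : ℕ) < (j : ℕ) then (1 / ((j : ℕ) : ℝ) - 1 / ((n : ℝ) - 1)) * y i * y j else 0)
        - p * (1 - p) * ∑ i : { i // i ∈ Finset.Icc k (n - 2) }, ∑ j : { i // i ∈ Finset.Icc k (n - 2) },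
          (if (i : ℕ) < (j : ℕ) then (1 / ((j : ℕ) : ℝ) - 1 / ((n : ℝ) - 1)) * (x i - y i) * (x j - y j) else 0) := by
    rw [Finset.mul_sum, Finset.mul_sum, Finset.mul_sum, ← Finset.sum_add_distrib,
      ← Finset.sum_sub_distrib]
    refine Finset.sum_congr rfl fun i _ => ?_
    rw [Finset.mul_sum, Finset.mul_sum, Finset.mul_sum, ← Finset.sum_add_distrib,
      ← Finset.sum_sub_distrib]
    refine Finset.sum_congr rfl fun j _ => ?_
    by_cases h : (i : ℕ) < (j : ℕ) <;> simp [h] <;> ring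
  rw [hA, hB, hC]
  nlinarith [hQ, mul_nonneg (mul_nonneg hp hq) hQ]
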